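/- arXiv:2603.10236 — 2 statements merged into one kernel-verified Lean document; each statement's English description precedes it below -/
import Mathlib

section
/- With the setup of weighted assignments (positive literal weights, multiplicative aggregation, best(A) = max of the two polarity weights), if a partial assignment μ satisfies w(μ) · I_max(μ) < θ for a real threshold θ, then every total assignment η extending μ satisfies w(η) < θ. In particular, no model of weight at least θ extends μ. -/
open Finset

/-- If w(μ) · I_max(μ) < θ then every total extension η of μ has w(η) < θ. -/
theorem weight_pruning_sound {V : Type*} [Fintype V] [DecidableEq V]
    (w : V → Bool → ℝ) (hw : ∀ v b, 0 < w v b)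
    (S : Finset V) (μ : V → Bool) (θ : ℝ)
    (hbound : (∏ v ∈ S, w v (μ v)) * (∏ v ∈ Sᶜ, max (w v true) (w v false)) < θ) :
    ∀ η : V → Bool, (∀ v ∈ S, η v = μ v) → (∏ v, w v (η v)) < θ := by
  intro η hη
  have hsplit : (∏ v, w v (η v)) =
      (∏ v ∈ S, w v (η v)) * (∏ v ∈ Sᶜ, w v (η v)) :=
    (Finset.prod_mul_prod_compl S _).symm
  have h1 : (∏ v ∈ S, w v (η v)) = ∏ v ∈ S, w v (μ v) :=
    Finset.prod_congr rfl fun v hv => by rw [hη v hv]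
  have h2 : (∏ v ∈ Sᶜ, w v (η v)) ≤ ∏ v ∈ Sᶜ, max (w v true) (w v false) := by
    apply Finset.prod_le_prod
    · intro v _; exact (hw v _).le
    · intro v _; cases η v
      · exact le_max_right _ _
      · exact le_max_left _ _
  calc (∏ v, w v (η v)) = (∏ v ∈ S, w v (μ v)) * (∏ v ∈ Sᶜ, w v (η v)) := by
        rw [hsplit, h1]
    _ ≤ (∏ v ∈ S, w v (μ v)) * (∏ v ∈ Sᶜ, max (w v true) (w v false)) := by
        apply mul_le_mul_of_nonneg_left h2
        exact Finset.prod_nonneg fun v _ => (hw v _).le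
    _ < θ := hbound
end

section
/- Soundness of greedy weight-conflict learning: let S be a set of literals over distinct variables such that w(S) · I_max(S) < θ, where w(S) = ∏_{ℓ∈S} w(ℓ) and I_max(S) = ∏_{A ∉ vars(S)} best(A). Let C_w be the clause ⋁_{ℓ∈S} ¬ℓ. Then every total assignment η with w(η) ≥ θ satisfies C_w, i.e., η falsifies at least one literal of S. -/
open Finset

/-- Soundness of greedy weight-conflict learning: if w(S)·I_max(S) < θ, then
every total assignment η with w(η) ≥ θ satisfies the conflict clause
C_w = ⋁_{ℓ∈S} ¬ℓ, i.e. η falsifies some literal of S. -/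
theorem greedy_conflict_clause_sound {V : Type*} [Fintype V] [DecidableEq V]
    (w : V → Bool → ℝ) (hw : ∀ v b, 0 < w v b)
    (T : Finset V) (σ : V → Bool) (θ : ℝ)
    (hbound : (∏ v ∈ T, w v (σ v)) * (∏ v ∈ Tᶜ, max (w v true) (w v false)) < θ)
    (η : V → Bool) (hη : θ ≤ ∏ v, w v (η v)) :
    ∃ v ∈ T, η v ≠ σ v := by
  by_contra h
  push_neg at h
  have hsplit : (∏ v, w v (η v)) = (∏ v ∈ T, w v (η v)) * ∏ v ∈ Tᶜ, w v (η v) :=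
    (Finset.prod_mul_prod_compl T _).symm
  have h1 : (∏ v ∈ T, w v (η v)) = ∏ v ∈ T, w v (σ v) :=
    Finset.prod_congr rfl fun v hv => by rw [h v hv]
  have h2 : (∏ v ∈ Tᶜ, w v (η v)) ≤ ∏ v ∈ Tᶜ, max (w v true) (w v false) := by
    apply Finset.prod_le_prod
    · exact fun v _ => (hw v _).le
    · intro v _
      cases η v
      · exact le_max_right _ _
      · exact le_max_left _ _
  have := hη.trans_eq hsplit
  rw [h1] at this
  have hposT : 0 < ∏ v ∈ T, w v (σ v) := Finset.prod_pos fun v _ => hw v _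
  nlinarith
end
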